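/- If B is a ball in the direct product of finitely many ultrametric spaces (Y_i,u_i) with the minimum ultrametric, then each projection π_k B is a ball in (Y_k,u_k) and B equals the product of its projections: B = ∏_i π_i B. -/

import Mathlib

section Ultrametric

variable {Y Y' : Type*} {Γ Γ' : Type*} [LinearOrder Γ] [OrderTop Γ]
  [LinearOrder Γ'] [OrderTop Γ']

/-- The axioms of an ultrametric space with distance values in `Γ` (with top element `∞`). -/
def IsUltrametric (u : Y → Y → Γ) : Prop :=
  (∀ y z, u y z = ⊤ ↔ y = z) ∧
  (∀ x y z, min (u y x) (u x z) ≤ u y z) ∧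
  (∀ y z, u y z = u z y)

/-- The closed ball of radius `α` around `y`. -/
def closedBall (u : Y → Y → Γ) (α : Γ) (y : Y) : Set Y := {z | α ≤ u y z}

/-- `B(x,y)`, the smallest closed ball containing `x` and `y`. -/
def smallBall (u : Y → Y → Γ) (x y : Y) : Set Y := closedBall u (u x y) x

/-- A ball: a union of a nonempty collection of closed balls having a common element. -/
def IsBall (u : Y → Y → Γ) (S : Set Y) : Prop :=
  ∃ C : Set (Γ × Y), C.Nonempty ∧ (∃ y₀, ∀ p ∈ C, y₀ ∈ closedBall u p.1 p.2) ∧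
    S = ⋃ p ∈ C, closedBall u p.1 p.2

/-- Spherical completeness: every nest of balls has nonempty intersection. -/
def SphericallyComplete (u : Y → Y → Γ) : Prop :=
  ∀ N : Set (Set Y), N.Nonempty → (∀ B ∈ N, IsBall u B) →
    IsChain (· ⊆ ·) N → (⋂₀ N).Nonempty

/-- `z'` is an attractor for `f`. -/
def IsAttractor (u : Y → Y → Γ) (u' : Y' → Y' → Γ') (f : Y → Y') (z' : Y') : Prop :=
  ∀ y : Y, f y ≠ z' → ∃ z : Y,
    u' (f y) z' < u' (f z) z' ∧ f '' smallBall u y z ⊆ smallBall u' (f y) z'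

/-- A map is immediate if every element of the target is an attractor for it. -/
def Immediate (u : Y → Y → Γ) (u' : Y' → Y' → Γ') (f : Y → Y') : Prop :=
  ∀ z' : Y', IsAttractor u u' f z'

end Ultrametric


lemma ball_nested {Y Γ : Type*} [LinearOrder Γ] [OrderTop Γ]
    {u : Y → Y → Γ} (hu : IsUltrametric u) {α β : Γ} (hab : α ≤ β)
    {x y w : Y} (hw1 : α ≤ u y w) (hw2 : β ≤ u x w) :
    ∀ z, β ≤ u x z → α ≤ u y z := by
  intro z hz
  have h1 : α ≤ u y x := by
    have h := hu.2.1 w y x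
    have hwx : β ≤ u w x := by rw [hu.2.2 w x]; exact hw2
    exact le_trans (le_min hw1 (le_trans hab hwx)) h
  exact le_trans (le_min h1 (le_trans hab hz)) (hu.2.1 x y z)

/-- balls in a finite direct product of ultrametric spaces (with the
minimum ultrametric) project to balls and are the product of their projections. -/
theorem ball_in_product {I : Type*} [Fintype I] [Nonempty I] {Γ : Type*}
    [LinearOrder Γ] [OrderTop Γ]
    (Y : I → Type*) (u : ∀ i, Y i → Y i → Γ) (hu : ∀ i, IsUltrametric (u i))
    (B : Set (∀ i, Y i))
    (hB : IsBall (fun a b : ∀ i, Y i => Finset.univ.inf fun i => u i (a i) (b i)) B) :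
    (∀ k : I, IsBall (u k) ((fun a : ∀ i, Y i => a k) '' B)) ∧
      B = Set.pi Set.univ (fun i => (fun a : ∀ j, Y j => a i) '' B) := by
  classical
  obtain ⟨C, hCne, ⟨y₀, hy₀⟩, hBeq⟩ := hB
  -- membership in product closed ball, componentwise
  have hmem : ∀ (p : Γ × (∀ i, Y i)) (z : ∀ i, Y i),
      (z ∈ closedBall (fun a b : ∀ i, Y i => Finset.univ.inf fun i => u i (a i) (b i)) p.1 p.2)
        ↔ ∀ i, p.1 ≤ u i (p.2 i) (z i) := by
    intro p z
    constructor
    · intro h i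
      exact le_trans h (Finset.inf_le (Finset.mem_univ i))
    · intro h
      exact Finset.le_inf fun i _ => h i
  have hy₀' : ∀ p ∈ C, ∀ i, p.1 ≤ u i (p.2 i) (y₀ i) := fun p hp i => (hmem p y₀).1 (hy₀ p hp) i
  constructor
  · intro k
    refine ⟨(fun p : Γ × (∀ i, Y i) => (p.1, p.2 k)) '' C, hCne.image _, ⟨y₀ k, ?_⟩, ?_⟩
    · rintro q ⟨p, hp, rfl⟩
      exact hy₀' p hp k
    · ext zk
      simp only [Set.mem_image, Set.mem_iUnion]
      constructor
      · rintro ⟨z, hz, rfl⟩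
        rw [hBeq] at hz
        simp only [Set.mem_iUnion] at hz
        obtain ⟨p, hp, hzp⟩ := hz
        exact ⟨(p.1, p.2 k), ⟨p, hp, rfl⟩, (hmem p z).1 hzp k⟩
      · rintro ⟨q, ⟨p, hp, rfl⟩, hzk⟩
        refine ⟨fun i => if h : i = k then h ▸ zk else p.2 i, ?_, by simp⟩
        rw [hBeq]
        simp only [Set.mem_iUnion]
        refine ⟨p, hp, (hmem p _).2 fun i => ?_⟩
        by_cases h : i = k
        · subst h; simpa [closedBall] using hzk
        · simp only [h, dif_neg, not_false_iff]
          rw [((hu i).1 (p.2 i) (p.2 i)).2 rfl]; exact le_top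
  · ext z
    simp only [Set.mem_pi, Set.mem_univ, Set.mem_image, forall_true_left]
    constructor
    · intro hz i
      exact ⟨z, hz, rfl⟩
    · intro hz
      choose w hw hwz using hz
      have hwp : ∀ i, ∃ p ∈ C, p.1 ≤ u i (p.2 i) (z i) := by
        intro i
        have := hw i
        rw [hBeq] at this
        simp only [Set.mem_iUnion] at this
        obtain ⟨p, hp, hwip⟩ := this
        exact ⟨p, hp, (hwz i) ▸ (hmem p (w i)).1 hwip i⟩
      choose p hpC hpz using hwp
      obtain ⟨j, -, hj⟩ := Finset.exists_min_image (Finset.univ : Finset I)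
        (fun i => (p i).1) ⟨Classical.arbitrary I, Finset.mem_univ _⟩
      rw [hBeq]
      simp only [Set.mem_iUnion]
      refine ⟨p j, hpC j, (hmem (p j) z).2 fun i => ?_⟩
      exact ball_nested (hu i) (hj i (Finset.mem_univ i)) (hy₀' (p j) (hpC j) i)
        (hy₀' (p i) (hpC i) i) (z i) (hpz i)
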